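/- (Time-homogeneous stability criterion as a corollary.) Let Π be a single N×N stochastic matrix with entries π_{ij} and let ψ ≡ constant (so the Markov chain is time-homogeneous). Then the Markov jump linear system is exponentially mean square stable if and only if there exist symmetric positive definite n×n matrices Z(1),…,Z(N) such that A(i)ᵀ (Σ_{j=1}^{N} π_{ij} Z(j)) A(i) − Z(i) is negative definite for every i ∈ 𝒩. -/

import Mathlib

open Matrix
open scoped Classical

noncomputable section

namespace SMJLS

/-- The ordered product `Φ = A(t(d−1)) ⋯ A(t 1) A(t 0)` along a tuple of modes. -/
def pathProd {n N : ℕ} (Am : Fin N → Matrix (Fin n) (Fin n) ℝ) {d : ℕ}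
    (t : Fin d → Fin N) : Matrix (Fin n) (Fin n) ℝ :=
  (((List.finRange d).reverse).map fun l => Am (t l)).prod

/-- `Gmat Am Pm ψ i j k` is `E[Φ(k,j)ᵀ Φ(k,j) ∣ θ(j) = i]`, written as the explicit sum over
tuples `(i_j, …, i_{k−1}) ∈ 𝒩^{k−j}` with `i_j = i` of
`(∏_{l=j+1}^{k−1} π_{i_{l−1} i_l}(ψ(l))) • ΦᵀΦ` where `Φ = A(i_{k−1}) ⋯ A(i_j)`;
by convention it is `I` when `k = j`. -/
def Gmat {n N J : ℕ} (Am : Fin N → Matrix (Fin n) (Fin n) ℝ)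
    (Pm : Fin J → Matrix (Fin N) (Fin N) ℝ) (ψ : ℕ → Fin J) (i : Fin N) (j k : ℕ) :
    Matrix (Fin n) (Fin n) ℝ :=
  if k ≤ j then 1
  else
    ∑ t : Fin (k - j - 1 + 1) → Fin N,
      (if t 0 = i then
          ∏ l : Fin (k - j - 1), Pm (ψ (j + (l : ℕ) + 1)) (t l.castSucc) (t l.succ)
        else 0) • ((pathProd Am t)ᵀ * pathProd Am t)

/-- Exponential mean square stability (of a single switching sequence) with
explicit constants `c` and `lam`:  `G_ψ(i,j,k) ≤ c λ^(k−j) I` in the Loewner order. -/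
def EMSSWith {n N J : ℕ} (Am : Fin N → Matrix (Fin n) (Fin n) ℝ)
    (Pm : Fin J → Matrix (Fin N) (Fin N) ℝ) (c lam : ℝ) (ψ : ℕ → Fin J) : Prop :=
  ∀ (i : Fin N) (j k : ℕ), j ≤ k →
    ((c * lam ^ (k - j)) • (1 : Matrix (Fin n) (Fin n) ℝ) - Gmat Am Pm ψ i j k).PosSemidef

/-- Uniform exponential mean square stability of the switched Markov jump linear system. -/
def UEMSS {n N J : ℕ} (Am : Fin N → Matrix (Fin n) (Fin n) ℝ)
    (Pm : Fin J → Matrix (Fin N) (Fin N) ℝ) (Ψ : Set (ℕ → Fin J)) : Prop :=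
  ∃ c lam : ℝ, 1 ≤ c ∧ 0 ≤ lam ∧ lam < 1 ∧ ∀ ψ ∈ Ψ, EMSSWith Am Pm c lam ψ

/-- Probability of the cylinder `{θ(0) = path 0, …, θ(k) = path k}`. -/
def weight {N J : ℕ} (Pm : Fin J → Matrix (Fin N) (Fin N) ℝ) (ψ : ℕ → Fin J)
    (p0 : Fin N → ℝ) (k : ℕ) (path : Fin (k + 1) → Fin N) : ℝ :=
  p0 (path 0) * ∏ l : Fin k, Pm (ψ ((l : ℕ) + 1)) (path l.castSucc) (path l.succ)

/-- Expectation of a functional `g` of the chain which depends only on `θ(0), …, θ(k)`. -/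
def pexp {N J : ℕ} (Pm : Fin J → Matrix (Fin N) (Fin N) ℝ) (ψ : ℕ → Fin J)
    (p0 : Fin N → ℝ) (k : ℕ) (g : (ℕ → Fin N) → ℝ) : ℝ :=
  ∑ path : Fin (k + 1) → Fin N,
    weight Pm ψ p0 k path *
      g (fun l => path ⟨min l k, Nat.lt_succ_of_le (min_le_right l k)⟩)

/-- A disturbance process is adapted when `w(k)` is measurable with respect to
`σ(θ(0),…,θ(k))`, i.e. `w(k)` is a function of the first `k+1` modes. -/
def Adapted {N m : ℕ} (w : ℕ → (ℕ → Fin N) → Fin m → ℝ) : Prop :=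
  ∀ (k : ℕ) (ω ω' : ℕ → Fin N), (∀ l, l ≤ k → ω l = ω' l) → w k ω = w k ω'

/-- State trajectory: `x(k+1) = A(θ(k)) x(k) + B(θ(k)) w(k)`, `x(0) = x0`. -/
def traj {n m N : ℕ} (Am : Fin N → Matrix (Fin n) (Fin n) ℝ)
    (Bm : Fin N → Matrix (Fin n) (Fin m) ℝ) (x0 : (ℕ → Fin N) → Fin n → ℝ)
    (w : ℕ → (ℕ → Fin N) → Fin m → ℝ) : ℕ → (ℕ → Fin N) → Fin n → ℝ
  | 0, ω => x0 ω
  | k + 1, ω => (Am (ω k)).mulVec (traj Am Bm x0 w k ω) + (Bm (ω k)).mulVec (w k ω)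

/-- Error trajectory: `z(k) = C(θ(k)) x(k) + D(θ(k)) w(k)`. -/
def errv {n m p N : ℕ} (Am : Fin N → Matrix (Fin n) (Fin n) ℝ)
    (Bm : Fin N → Matrix (Fin n) (Fin m) ℝ) (Cm : Fin N → Matrix (Fin p) (Fin n) ℝ)
    (Dm : Fin N → Matrix (Fin p) (Fin m) ℝ) (x0 : (ℕ → Fin N) → Fin n → ℝ)
    (w : ℕ → (ℕ → Fin N) → Fin m → ℝ) (k : ℕ) (ω : ℕ → Fin N) : Fin p → ℝ :=
  (Cm (ω k)).mulVec (traj Am Bm x0 w k ω) + (Dm (ω k)).mulVec (w k ω)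

/-- `E[‖v(k)‖²]` for an adapted process `v`. -/
def energy {N J d : ℕ} (Pm : Fin J → Matrix (Fin N) (Fin N) ℝ) (ψ : ℕ → Fin J)
    (p0 : Fin N → ℝ) (v : ℕ → (ℕ → Fin N) → Fin d → ℝ) (k : ℕ) : ℝ :=
  pexp Pm ψ p0 k (fun ω => v k ω ⬝ᵥ v k ω)

/-- Mean square strict contractiveness with constant `γ` for the single switching
sequence `ψ` : whenever `x(0) = 0`, `‖z‖_{2,e} ≤ γ ‖w‖_{2,e}` for every admissible `w`. -/
def ContractiveWith {n m p N J : ℕ} (Am : Fin N → Matrix (Fin n) (Fin n) ℝ)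
    (Bm : Fin N → Matrix (Fin n) (Fin m) ℝ) (Cm : Fin N → Matrix (Fin p) (Fin n) ℝ)
    (Dm : Fin N → Matrix (Fin p) (Fin m) ℝ) (Pm : Fin J → Matrix (Fin N) (Fin N) ℝ)
    (γ : ℝ) (ψ : ℕ → Fin J) (p0 : Fin N → ℝ) : Prop :=
  ∀ w : ℕ → (ℕ → Fin N) → Fin m → ℝ, Adapted w →
    Summable (fun k => energy Pm ψ p0 w k) →
    Summable (fun k => energy Pm ψ p0 (errv Am Bm Cm Dm (fun _ => 0) w) k) ∧
      ∑' k, energy Pm ψ p0 (errv Am Bm Cm Dm (fun _ => 0) w) k ≤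
        γ ^ 2 * ∑' k, energy Pm ψ p0 w k

/-- Uniform mean square strict contractiveness of the switched system. -/
def UMSSC {n m p N J : ℕ} (Am : Fin N → Matrix (Fin n) (Fin n) ℝ)
    (Bm : Fin N → Matrix (Fin n) (Fin m) ℝ) (Cm : Fin N → Matrix (Fin p) (Fin n) ℝ)
    (Dm : Fin N → Matrix (Fin p) (Fin m) ℝ) (Pm : Fin J → Matrix (Fin N) (Fin N) ℝ)
    (Ψ : Set (ℕ → Fin J)) (p0 : Fin N → ℝ) : Prop :=
  ∃ γ : ℝ, 0 < γ ∧ γ < 1 ∧ ∀ ψ ∈ Ψ, ContractiveWith Am Bm Cm Dm Pm γ ψ p0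

/-- Marginal distribution `p(k) = p(0) Π(ψ(1)) ⋯ Π(ψ(k))` of the chain. -/
def pdist {N J : ℕ} (Pm : Fin J → Matrix (Fin N) (Fin N) ℝ) (ψ : ℕ → Fin J)
    (p0 : Fin N → ℝ) : ℕ → Fin N → ℝ
  | 0 => p0
  | k + 1 => Matrix.vecMul (pdist Pm ψ p0 k) (Pm (ψ (k + 1)))

/-- `ℒ(i,X) = A(i)ᵀ X A(i) + C(i)ᵀ C(i)`. -/
def opL {n p N : ℕ} (Am : Fin N → Matrix (Fin n) (Fin n) ℝ)
    (Cm : Fin N → Matrix (Fin p) (Fin n) ℝ) (i : Fin N) (X : Matrix (Fin n) (Fin n) ℝ) :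
    Matrix (Fin n) (Fin n) ℝ :=
  (Am i)ᵀ * X * Am i + (Cm i)ᵀ * Cm i

/-- `ℛ(i,X) = B(i)ᵀ X A(i) + D(i)ᵀ C(i)`. -/
def opR {n m p N : ℕ} (Am : Fin N → Matrix (Fin n) (Fin n) ℝ)
    (Bm : Fin N → Matrix (Fin n) (Fin m) ℝ) (Cm : Fin N → Matrix (Fin p) (Fin n) ℝ)
    (Dm : Fin N → Matrix (Fin p) (Fin m) ℝ) (i : Fin N) (X : Matrix (Fin n) (Fin n) ℝ) :
    Matrix (Fin m) (Fin n) ℝ :=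
  (Bm i)ᵀ * X * Am i + (Dm i)ᵀ * Cm i

/-- `𝒲(i,X) = I − B(i)ᵀ X B(i) − D(i)ᵀ D(i)`. -/
def opW {n m p N : ℕ} (Bm : Fin N → Matrix (Fin n) (Fin m) ℝ)
    (Dm : Fin N → Matrix (Fin p) (Fin m) ℝ) (i : Fin N) (X : Matrix (Fin n) (Fin n) ℝ) :
    Matrix (Fin m) (Fin m) ℝ :=
  1 - (Bm i)ᵀ * X * Bm i - (Dm i)ᵀ * Dm i

/-- `𝒮(i,X) = ℒ(i,X) + ℛ(i,X)ᵀ 𝒲(i,X)⁻¹ ℛ(i,X)`. -/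
def opS {n m p N : ℕ} (Am : Fin N → Matrix (Fin n) (Fin n) ℝ)
    (Bm : Fin N → Matrix (Fin n) (Fin m) ℝ) (Cm : Fin N → Matrix (Fin p) (Fin n) ℝ)
    (Dm : Fin N → Matrix (Fin p) (Fin m) ℝ) (i : Fin N) (X : Matrix (Fin n) (Fin n) ℝ) :
    Matrix (Fin n) (Fin n) ℝ :=
  opL Am Cm i X + (opR Am Bm Cm Dm i X)ᵀ * (opW Bm Dm i X)⁻¹ * opR Am Bm Cm Dm i X

/-- `ℱ(i,X) = A(i) + B(i) 𝒲(i,X)⁻¹ ℛ(i,X)`. -/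
def opF {n m p N : ℕ} (Am : Fin N → Matrix (Fin n) (Fin n) ℝ)
    (Bm : Fin N → Matrix (Fin n) (Fin m) ℝ) (Cm : Fin N → Matrix (Fin p) (Fin n) ℝ)
    (Dm : Fin N → Matrix (Fin p) (Fin m) ℝ) (i : Fin N) (X : Matrix (Fin n) (Fin n) ℝ) :
    Matrix (Fin n) (Fin n) ℝ :=
  Am i + Bm i * (opW Bm Dm i X)⁻¹ * opR Am Bm Cm Dm i X

/-- Backwards recursion for the perturbed finite-horizon Riccati difference equation,
indexed by the number `d = T + 1 − k` of remaining steps. -/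
def ricAuxE {n m p N J : ℕ} (Am : Fin N → Matrix (Fin n) (Fin n) ℝ)
    (Bm : Fin N → Matrix (Fin n) (Fin m) ℝ) (Cm : Fin N → Matrix (Fin p) (Fin n) ℝ)
    (Dm : Fin N → Matrix (Fin p) (Fin m) ℝ) (Pm : Fin J → Matrix (Fin N) (Fin N) ℝ)
    (ψ : ℕ → Fin J) (T : ℕ) (ε : ℝ) : ℕ → Fin N → Matrix (Fin n) (Fin n) ℝ
  | 0, _ => 0
  | d + 1, i =>
      opS Am Bm Cm Dm i
          (∑ j, Pm (ψ (T - d + 1)) i j • ricAuxE Am Bm Cm Dm Pm ψ T ε d j) + ε • 1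

/-- The perturbed finite-horizon Riccati solution `X_ψ(i,k,T,ε)`:
`X_ψ(i,T+1,T,ε) = 0` and `X_ψ(i,k,T,ε) = 𝒮(i, X̃_ψ(i,k+1,T,ε)) + εI` where
`X̃_ψ(i,k+1,T,ε) = Σ_j π_{ij}(ψ(k+1)) X_ψ(j,k+1,T,ε)`. -/
def ricE {n m p N J : ℕ} (Am : Fin N → Matrix (Fin n) (Fin n) ℝ)
    (Bm : Fin N → Matrix (Fin n) (Fin m) ℝ) (Cm : Fin N → Matrix (Fin p) (Fin n) ℝ)
    (Dm : Fin N → Matrix (Fin p) (Fin m) ℝ) (Pm : Fin J → Matrix (Fin N) (Fin N) ℝ)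
    (ψ : ℕ → Fin J) (i : Fin N) (k T : ℕ) (ε : ℝ) : Matrix (Fin n) (Fin n) ℝ :=
  ricAuxE Am Bm Cm Dm Pm ψ T ε (T + 1 - k) i

/-- The (unperturbed) finite-horizon Riccati solution `X_ψ(i,k,T)`. -/
def ric {n m p N J : ℕ} (Am : Fin N → Matrix (Fin n) (Fin n) ℝ)
    (Bm : Fin N → Matrix (Fin n) (Fin m) ℝ) (Cm : Fin N → Matrix (Fin p) (Fin n) ℝ)
    (Dm : Fin N → Matrix (Fin p) (Fin m) ℝ) (Pm : Fin J → Matrix (Fin N) (Fin N) ℝ)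
    (ψ : ℕ → Fin J) (i : Fin N) (k T : ℕ) : Matrix (Fin n) (Fin n) ℝ :=
  ricE Am Bm Cm Dm Pm ψ i k T 0

/-- `ℬ(i,X,Y) = [[A,B],[C,D]]ᵀ diag(X,I) [[A,B],[C,D]] − diag(Y,I)`. -/
def bigB {n m p N : ℕ} (Am : Fin N → Matrix (Fin n) (Fin n) ℝ)
    (Bm : Fin N → Matrix (Fin n) (Fin m) ℝ) (Cm : Fin N → Matrix (Fin p) (Fin n) ℝ)
    (Dm : Fin N → Matrix (Fin p) (Fin m) ℝ) (i : Fin N)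
    (X Y : Matrix (Fin n) (Fin n) ℝ) : Matrix (Fin n ⊕ Fin m) (Fin n ⊕ Fin m) ℝ :=
  (Matrix.fromBlocks (Am i) (Bm i) (Cm i) (Dm i))ᵀ *
      Matrix.fromBlocks X 0 0 (1 : Matrix (Fin p) (Fin p) ℝ) *
      Matrix.fromBlocks (Am i) (Bm i) (Cm i) (Dm i) -
    Matrix.fromBlocks Y 0 0 (1 : Matrix (Fin m) (Fin m) ℝ)

/-- The switching window `ψ_M(k) = (ψ(k+1), …, ψ(k+M))`. -/
def window {J : ℕ} (ψ : ℕ → Fin J) (M k : ℕ) : Fin M → Fin J :=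
  fun l => ψ (k + (l : ℕ) + 1)

/-- `Ψ_M`, the set of all windows of length `M` occurring in `Ψ`. -/
def windowSet {J : ℕ} (Ψ : Set (ℕ → Fin J)) (M : ℕ) : Set (Fin M → Fin J) :=
  { r | ∃ ψ ∈ Ψ, ∃ t : ℕ, r = window ψ M t }

/-- Closed-loop matrix `ℱ(i, X̃_ψ(i, l+1, T, ε))` at time `l`. -/
def Fcl {n m p N J : ℕ} (Am : Fin N → Matrix (Fin n) (Fin n) ℝ)
    (Bm : Fin N → Matrix (Fin n) (Fin m) ℝ) (Cm : Fin N → Matrix (Fin p) (Fin n) ℝ)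
    (Dm : Fin N → Matrix (Fin p) (Fin m) ℝ) (Pm : Fin J → Matrix (Fin N) (Fin N) ℝ)
    (ψ : ℕ → Fin J) (T : ℕ) (ε : ℝ) (i : Fin N) (l : ℕ) : Matrix (Fin n) (Fin n) ℝ :=
  opF Am Bm Cm Dm i (∑ j, Pm (ψ (l + 1)) i j • ricE Am Bm Cm Dm Pm ψ j (l + 1) T ε)

/-- Ordered closed-loop product `φ = F(t(d−1), j+d−1) ⋯ F(t 0, j)`. -/
def clPathProd {n N : ℕ} (F : Fin N → ℕ → Matrix (Fin n) (Fin n) ℝ) (j : ℕ) {d : ℕ}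
    (t : Fin d → Fin N) : Matrix (Fin n) (Fin n) ℝ :=
  (((List.finRange d).reverse).map fun l => F (t l) (j + (l : ℕ))).prod

/-- Closed-loop conditional second moment `H_ψ(i,j,k,T,ε)`. -/
def Hmat {n m p N J : ℕ} (Am : Fin N → Matrix (Fin n) (Fin n) ℝ)
    (Bm : Fin N → Matrix (Fin n) (Fin m) ℝ) (Cm : Fin N → Matrix (Fin p) (Fin n) ℝ)
    (Dm : Fin N → Matrix (Fin p) (Fin m) ℝ) (Pm : Fin J → Matrix (Fin N) (Fin N) ℝ)
    (ψ : ℕ → Fin J) (T : ℕ) (ε : ℝ) (i : Fin N) (j k : ℕ) :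
    Matrix (Fin n) (Fin n) ℝ :=
  if k ≤ j then 1
  else
    ∑ t : Fin (k - j - 1 + 1) → Fin N,
      (if t 0 = i then
          ∏ l : Fin (k - j - 1), Pm (ψ (j + (l : ℕ) + 1)) (t l.castSucc) (t l.succ)
        else 0) •
        ((clPathProd (Fcl Am Bm Cm Dm Pm ψ T ε) j t)ᵀ *
          clPathProd (Fcl Am Bm Cm Dm Pm ψ T ε) j t)

/-- `Y_ψ(i,k) = Σ_{j=k}^{k+M+1} E[Φ(j,k)ᵀΦ(j,k) ∣ θ(k)=i]`. -/
def Ysum {n N J : ℕ} (Am : Fin N → Matrix (Fin n) (Fin n) ℝ)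
    (Pm : Fin J → Matrix (Fin N) (Fin N) ℝ) (ψ : ℕ → Fin J) (M : ℕ) (i : Fin N)
    (k : ℕ) : Matrix (Fin n) (Fin n) ℝ :=
  ∑ j ∈ Finset.range (M + 2), Gmat Am Pm ψ i k (k + j)


/-! ### Auxiliary lemmas -/

section Aux

variable {n N : ℕ}

lemma psd_smul' {c : ℝ} {M : Matrix (Fin n) (Fin n) ℝ} (hc : 0 ≤ c)
    (hM : M.PosSemidef) : (c • M).PosSemidef := by
  refine ⟨?_, fun x => ?_⟩
  · unfold Matrix.IsHermitian
    rw [conjTranspose_smul, hM.1.eq]; simp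
  · have := mul_nonneg hc (hM.2 x)
    simpa [Finsupp.sum, Finset.mul_sum, mul_assoc, mul_left_comm] using this

lemma psd_conj' {A X : Matrix (Fin n) (Fin n) ℝ} (hX : X.PosSemidef) :
    (Aᵀ * X * A).PosSemidef := by
  have := hX.conjTranspose_mul_mul_same A
  rwa [conjTranspose_eq_transpose_of_trivial] at this

lemma psd_sum' {ι : Type*} (s : Finset ι) (f : ι → Matrix (Fin n) (Fin n) ℝ)
    (h : ∀ i ∈ s, (f i).PosSemidef) : (∑ i ∈ s, f i).PosSemidef := by
  classical
  induction s using Finset.induction with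
  | empty => simpa using Matrix.PosSemidef.zero
  | insert _ _ hx ih =>
    rw [Finset.sum_insert hx]
    exact ((h _ (Finset.mem_insert_self _ _)).add
      (ih fun i hi => h i (Finset.mem_insert_of_mem hi)))

lemma psd_of_isEmpty {M : Matrix (Fin 0) (Fin 0) ℝ} : M.PosSemidef := by
  constructor
  · ext i j; exact isEmptyElim i
  · intro x; simp [Finsupp.sum, Subsingleton.elim x 0]

lemma herm_smul_one_sub {Z : Matrix (Fin n) (Fin n) ℝ} (hZ : Z.IsHermitian) (μ : ℝ)
    (h : ∀ i, hZ.eigenvalues i ≤ μ) : (μ • 1 - Z).PosSemidef := by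
  have hs := hZ.spectral_theorem
  set U : Matrix (Fin n) (Fin n) ℝ := (hZ.eigenvectorUnitary : Matrix (Fin n) (Fin n) ℝ) with hU
  have hUU : U * star U = 1 := Matrix.mem_unitaryGroup_iff.mp hZ.eigenvectorUnitary.2
  have key : μ • 1 - Z = U * diagonal (fun i => μ - hZ.eigenvalues i) * star U := by
    have h1 : (μ • 1 : Matrix (Fin n) (Fin n) ℝ) = U * (μ • 1) * star U := by
      rw [mul_smul_comm, smul_mul_assoc, Matrix.mul_one, hUU]
    calc μ • 1 - Z
        = U * (μ • 1) * star U - U * diagonal (RCLike.ofReal ∘ hZ.eigenvalues) * star U := by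
          rw [← h1]; exact congrArg (fun M => μ • 1 - M) hs
      _ = U * ((μ • 1 - diagonal (RCLike.ofReal ∘ hZ.eigenvalues))) * star U := by
          rw [Matrix.mul_sub, Matrix.sub_mul]
      _ = _ := by
          congr 2
          rw [smul_one_eq_diagonal, diagonal_sub]
          rfl
  rw [key, Matrix.star_eq_conjTranspose]
  exact (Matrix.PosSemidef.diagonal (fun i => sub_nonneg.mpr (h i))).mul_mul_conjTranspose_same U

lemma herm_sub_smul_one {Z : Matrix (Fin n) (Fin n) ℝ} (hZ : Z.IsHermitian) (δ : ℝ)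
    (h : ∀ i, δ ≤ hZ.eigenvalues i) : (Z - δ • 1).PosSemidef := by
  have hs := hZ.spectral_theorem
  set U : Matrix (Fin n) (Fin n) ℝ := (hZ.eigenvectorUnitary : Matrix (Fin n) (Fin n) ℝ) with hU
  have hUU : U * star U = 1 := Matrix.mem_unitaryGroup_iff.mp hZ.eigenvectorUnitary.2
  have key : Z - δ • 1 = U * diagonal (fun i => hZ.eigenvalues i - δ) * star U := by
    have h1 : (δ • 1 : Matrix (Fin n) (Fin n) ℝ) = U * (δ • 1) * star U := by
      rw [mul_smul_comm, smul_mul_assoc, Matrix.mul_one, hUU]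
    calc Z - δ • 1
        = U * diagonal (RCLike.ofReal ∘ hZ.eigenvalues) * star U - U * (δ • 1) * star U := by
          rw [← h1]; exact congrArg (fun M => M - δ • 1) hs
      _ = U * ((diagonal (RCLike.ofReal ∘ hZ.eigenvalues) - δ • 1)) * star U := by
          rw [Matrix.mul_sub, Matrix.sub_mul]
      _ = _ := by
          congr 2
          rw [smul_one_eq_diagonal, diagonal_sub]
          rfl
  rw [key, Matrix.star_eq_conjTranspose]
  exact (Matrix.PosSemidef.diagonal (fun i => sub_nonneg.mpr (h i))).mul_mul_conjTranspose_same U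

lemma exists_upper {Z : Matrix (Fin n) (Fin n) ℝ} (hZ : Z.IsHermitian) :
    ∃ b : ℝ, 1 ≤ b ∧ (b • 1 - Z).PosSemidef := by
  refine ⟨1 + ∑ j, |hZ.eigenvalues j|,
    le_add_of_nonneg_right (Finset.sum_nonneg fun j _ => abs_nonneg _),
    herm_smul_one_sub hZ _ fun i => ?_⟩
  calc hZ.eigenvalues i ≤ |hZ.eigenvalues i| := le_abs_self _
    _ ≤ ∑ j, |hZ.eigenvalues j| :=
        Finset.single_le_sum (f := fun j => |hZ.eigenvalues j|)
          (fun j _ => abs_nonneg _) (Finset.mem_univ i)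
    _ ≤ _ := by linarith

lemma exists_lower {Z : Matrix (Fin n) (Fin n) ℝ} (hZ : Z.PosDef) :
    ∃ δ : ℝ, 0 < δ ∧ δ ≤ 1 ∧ (Z - δ • 1).PosSemidef := by
  rcases Nat.eq_zero_or_pos n with h0 | hpos
  · subst h0
    exact ⟨1, one_pos, le_refl _, psd_of_isEmpty⟩
  · have : Nonempty (Fin n) := Fin.pos_iff_nonempty.mp hpos
    set δ0 := Finset.univ.inf' Finset.univ_nonempty hZ.1.eigenvalues with hδ0
    refine ⟨min 1 δ0, lt_min one_pos ?_, min_le_left _ _, herm_sub_smul_one hZ.1 _ fun i => ?_⟩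
    · rw [Finset.lt_inf'_iff]
      exact fun i _ => hZ.eigenvalues_pos i
    · exact le_trans (min_le_right _ _) (Finset.inf'_le _ (Finset.mem_univ i))

lemma pd_smul_one {a : ℝ} (ha : 0 < a) :
    ((a • 1 : Matrix (Fin n) (Fin n) ℝ)).PosDef := by
  rw [Matrix.smul_one_eq_diagonal]
  exact Matrix.PosDef.diagonal fun _ => ha

variable (Am : Fin N → Matrix (Fin n) (Fin n) ℝ) (Pi0 : Matrix (Fin N) (Fin N) ℝ)

lemma pathProd_cons {d : ℕ} (x : Fin N) (t : Fin (d + 1) → Fin N) :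
    pathProd Am (Fin.cons x t) = pathProd Am t * Am x := by
  unfold pathProd
  rw [List.finRange_succ, List.reverse_cons, List.map_append, List.prod_append,
    List.map_reverse, List.map_reverse, List.map_map]
  simp [Function.comp_def]

lemma pathProd_single (t : Fin 1 → Fin N) : pathProd Am t = Am (t 0) := by
  unfold pathProd
  simp [List.finRange_succ]

/-- `conjSum M i = A(i)ᵀ (∑ⱼ π_{ij} M j) A(i)`. -/
def conjSum (M : Fin N → Matrix (Fin n) (Fin n) ℝ) (i : Fin N) :
    Matrix (Fin n) (Fin n) ℝ :=
  (Am i)ᵀ * (∑ j, Pi0 i j • M j) * Am i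

def Smat (d : ℕ) (i : Fin N) : Matrix (Fin n) (Fin n) ℝ :=
  ∑ t : Fin (d + 1) → Fin N,
    (if t 0 = i then ∏ l : Fin d, Pi0 (t l.castSucc) (t l.succ) else 0) •
      ((pathProd Am t)ᵀ * pathProd Am t)

lemma prodTrans_cons {d : ℕ} (x : Fin N) (t : Fin (d + 1) → Fin N) :
    ∏ l : Fin (d + 1), Pi0 ((Fin.cons x t : Fin (d + 2) → Fin N) l.castSucc)
        ((Fin.cons x t : Fin (d + 2) → Fin N) l.succ)
      = Pi0 x (t 0) * ∏ l : Fin d, Pi0 (t l.castSucc) (t l.succ) := by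
  rw [Fin.prod_univ_succ]
  simp only [Fin.castSucc_zero, Fin.cons_zero, Fin.cons_succ, ← Fin.succ_castSucc]

lemma Smat_succ (d : ℕ) (i : Fin N) :
    Smat Am Pi0 (d + 1) i = conjSum Am Pi0 (Smat Am Pi0 d) i := by
  have lhs_eq : Smat Am Pi0 (d + 1) i
      = ∑ t : Fin (d + 1) → Fin N,
          (Pi0 i (t 0) * ∏ l : Fin d, Pi0 (t l.castSucc) (t l.succ)) •
            ((pathProd Am t * Am i)ᵀ * (pathProd Am t * Am i)) := by
    unfold Smat
    rw [← Equiv.sum_comp (Fin.consEquiv (fun _ : Fin (d + 2) => Fin N))]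
    rw [Fintype.sum_prod_type]
    have step : ∀ x : Fin N, ∀ t : Fin (d + 1) → Fin N,
        ((if (Fin.consEquiv (fun _ : Fin (d + 2) => Fin N)) (x, t) 0 = i then
            ∏ l : Fin (d + 1),
              Pi0 ((Fin.consEquiv (fun _ : Fin (d + 2) => Fin N)) (x, t) l.castSucc)
              ((Fin.consEquiv (fun _ : Fin (d + 2) => Fin N)) (x, t) l.succ)
          else 0) •
          ((pathProd Am ((Fin.consEquiv (fun _ : Fin (d + 2) => Fin N)) (x, t)))ᵀ *
            pathProd Am ((Fin.consEquiv (fun _ : Fin (d + 2) => Fin N)) (x, t))))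
        = (if x = i then (Pi0 x (t 0) * ∏ l : Fin d, Pi0 (t l.castSucc) (t l.succ)) else 0) •
            ((pathProd Am t * Am x)ᵀ * (pathProd Am t * Am x)) := by
      intro x t
      have he : (Fin.consEquiv (fun _ : Fin (d + 2) => Fin N)) (x, t) = Fin.cons x t := rfl
      rw [he, prodTrans_cons, pathProd_cons, Fin.cons_zero]
    simp only [step]
    rw [Finset.sum_comm]
    simp only [ite_smul, zero_smul, Finset.sum_ite_eq', Finset.mem_univ, if_true]
  have inner : (∑ j, Pi0 i j • Smat Am Pi0 d j)
      = ∑ t : Fin (d + 1) → Fin N,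
          (Pi0 i (t 0) * ∏ l : Fin d, Pi0 (t l.castSucc) (t l.succ)) •
            ((pathProd Am t)ᵀ * pathProd Am t) := by
    unfold Smat
    simp only [Finset.smul_sum]
    rw [Finset.sum_comm]
    simp only [smul_ite, smul_zero, smul_smul, mul_ite, mul_zero, ite_smul, zero_smul,
      Finset.sum_ite_eq, Finset.mem_univ, if_true]
  rw [lhs_eq]
  unfold conjSum
  rw [inner, Finset.mul_sum, Finset.sum_mul]
  refine Finset.sum_congr rfl fun t _ => ?_
  rw [Matrix.mul_smul, Matrix.smul_mul]
  congr 1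
  simp only [Matrix.transpose_mul, Matrix.mul_assoc]

def iter (X : Fin N → Matrix (Fin n) (Fin n) ℝ) :
    ℕ → Fin N → Matrix (Fin n) (Fin n) ℝ
  | 0 => X
  | d + 1 => conjSum Am Pi0 (iter X d)

lemma Smat_zero (hProw : ∀ i : Fin N, ∑ j, Pi0 i j = 1) (i : Fin N) :
    Smat Am Pi0 0 i = conjSum Am Pi0 (fun _ => 1) i := by
  unfold Smat conjSum
  rw [← Equiv.sum_comp (Equiv.funUnique (Fin 1) (Fin N)).symm]
  have key : ∀ x : Fin N,
      ((if (Equiv.funUnique (Fin 1) (Fin N)).symm x 0 = i then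
          ∏ l : Fin 0, Pi0 (((Equiv.funUnique (Fin 1) (Fin N)).symm x) l.castSucc)
            (((Equiv.funUnique (Fin 1) (Fin N)).symm x) l.succ) else 0) •
        ((pathProd Am ((Equiv.funUnique (Fin 1) (Fin N)).symm x))ᵀ *
          pathProd Am ((Equiv.funUnique (Fin 1) (Fin N)).symm x)))
      = (if x = i then (1:ℝ) else 0) • ((Am x)ᵀ * Am x) := by
    intro x
    have hp : pathProd Am ((Equiv.funUnique (Fin 1) (Fin N)).symm x) = Am x := by
      rw [pathProd_single]; rfl
    rw [hp]
    simp [Equiv.funUnique]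
  simp only [key, ite_smul, zero_smul, one_smul, Finset.sum_ite_eq', Finset.mem_univ, if_true]
  have h1 : (∑ j, Pi0 i j • (1 : Matrix (Fin n) (Fin n) ℝ)) = 1 := by
    rw [← Finset.sum_smul, hProw, one_smul]
  rw [h1, Matrix.mul_one]

lemma iter_one_eq_Smat (hProw : ∀ i : Fin N, ∑ j, Pi0 i j = 1) (d : ℕ) (i : Fin N) :
    iter Am Pi0 (fun _ => 1) (d + 1) i = Smat Am Pi0 d i := by
  induction d generalizing i with
  | zero =>
    rw [Smat_zero Am Pi0 hProw]; rfl
  | succ d ih =>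
    rw [Smat_succ]
    show conjSum Am Pi0 (iter Am Pi0 (fun _ => 1) (d + 1)) i = _
    unfold conjSum
    congr 1
    · congr 1
      refine Finset.sum_congr rfl fun j _ => ?_
      rw [ih j]

lemma Gmat_eq (hProw : ∀ i : Fin N, ∑ j, Pi0 i j = 1) (i : Fin N) (j k : ℕ) :
    Gmat Am (fun _ : Fin 1 => Pi0) (fun _ => (0 : Fin 1)) i j k
      = iter Am Pi0 (fun _ => 1) (k - j) i := by
  unfold Gmat
  by_cases h : k ≤ j
  · rw [if_pos h]
    have h0 : k - j = 0 := by omega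
    rw [h0]; rfl
  · rw [if_neg h]
    have hd : k - j = (k - j - 1) + 1 := by omega
    conv_rhs => rw [hd]
    rw [iter_one_eq_Smat Am Pi0 hProw]
    rfl

lemma conjSum_psd (hPnn : ∀ i j : Fin N, 0 ≤ Pi0 i j)
    {M : Fin N → Matrix (Fin n) (Fin n) ℝ}
    (hM : ∀ j, (M j).PosSemidef) (i : Fin N) : (conjSum Am Pi0 M i).PosSemidef :=
  psd_conj' (psd_sum' _ _ fun j _ => psd_smul' (hPnn i j) (hM j))

lemma conjSum_sub (M M' : Fin N → Matrix (Fin n) (Fin n) ℝ) (i : Fin N) :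
    conjSum Am Pi0 M i - conjSum Am Pi0 M' i
      = conjSum Am Pi0 (fun j => M j - M' j) i := by
  unfold conjSum
  rw [← Matrix.sub_mul, ← Matrix.mul_sub, ← Finset.sum_sub_distrib]
  simp only [smul_sub]

lemma conjSum_smul (a : ℝ) (M : Fin N → Matrix (Fin n) (Fin n) ℝ) (i : Fin N) :
    conjSum Am Pi0 (fun j => a • M j) i = a • conjSum Am Pi0 M i := by
  unfold conjSum
  have hs : (∑ j, Pi0 i j • (a • M j)) = a • ∑ j, Pi0 i j • M j := by
    rw [Finset.smul_sum]
    exact Finset.sum_congr rfl fun j _ => smul_comm _ _ _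
  rw [hs, Matrix.mul_smul, Matrix.smul_mul]

lemma conjSum_sum {ι : Type*} (s : Finset ι)
    (M : ι → Fin N → Matrix (Fin n) (Fin n) ℝ) (i : Fin N) :
    conjSum Am Pi0 (fun j => ∑ d ∈ s, M d j) i = ∑ d ∈ s, conjSum Am Pi0 (M d) i := by
  unfold conjSum
  have hs : (∑ j, Pi0 i j • ∑ d ∈ s, M d j) = ∑ d ∈ s, ∑ j, Pi0 i j • M d j := by
    rw [Finset.sum_comm]
    exact Finset.sum_congr rfl fun j _ => Finset.smul_sum
  rw [hs, Finset.mul_sum, Finset.sum_mul]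

lemma iter_smul (a : ℝ) (X : Fin N → Matrix (Fin n) (Fin n) ℝ) :
    ∀ d i, iter Am Pi0 (fun j => a • X j) d i = a • iter Am Pi0 X d i := by
  intro d
  induction d with
  | zero => exact fun i => rfl
  | succ d ih =>
    intro i
    show conjSum Am Pi0 (iter Am Pi0 (fun j => a • X j) d) i = _
    have h : iter Am Pi0 (fun j => a • X j) d = fun j => a • iter Am Pi0 X d j :=
      funext fun j => ih j
    rw [h, conjSum_smul]
    rfl

lemma iter_psd (hPnn : ∀ i j : Fin N, 0 ≤ Pi0 i j) {X : Fin N → Matrix (Fin n) (Fin n) ℝ}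
    (hX : ∀ j, (X j).PosSemidef) : ∀ d i, (iter Am Pi0 X d i).PosSemidef := by
  intro d
  induction d with
  | zero => exact hX
  | succ d ih => exact fun i => conjSum_psd Am Pi0 hPnn ih i

lemma iter_mono (hPnn : ∀ i j : Fin N, 0 ≤ Pi0 i j)
    {X Y : Fin N → Matrix (Fin n) (Fin n) ℝ}
    (hXY : ∀ j, (Y j - X j).PosSemidef) :
    ∀ d i, (iter Am Pi0 Y d i - iter Am Pi0 X d i).PosSemidef := by
  intro d
  induction d with
  | zero => exact hXY
  | succ d ih =>
    intro i
    show (conjSum Am Pi0 (iter Am Pi0 Y d) i - conjSum Am Pi0 (iter Am Pi0 X d) i).PosSemidef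
    rw [conjSum_sub]
    exact conjSum_psd Am Pi0 hPnn ih i

lemma iter_contract (hPnn : ∀ i j : Fin N, 0 ≤ Pi0 i j)
    {X : Fin N → Matrix (Fin n) (Fin n) ℝ} {lam : ℝ} (hlam : 0 ≤ lam)
    (hX : ∀ j, (X j).PosSemidef)
    (h1 : ∀ i, (lam • X i - conjSum Am Pi0 X i).PosSemidef) :
    ∀ d i, (lam ^ d • X i - iter Am Pi0 X d i).PosSemidef := by
  intro d
  induction d with
  | zero =>
    intro i
    simp only [pow_zero, one_smul]
    show (X i - X i).PosSemidef
    rw [sub_self]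
    exact Matrix.PosSemidef.zero
  | succ d ih =>
    intro i
    have key : lam ^ (d + 1) • X i - iter Am Pi0 X (d + 1) i
        = lam ^ d • (lam • X i - conjSum Am Pi0 X i)
          + (conjSum Am Pi0 (fun j => lam ^ d • X j - iter Am Pi0 X d j) i) := by
      have h2 : conjSum Am Pi0 (fun j => lam ^ d • X j - iter Am Pi0 X d j) i
          = lam ^ d • conjSum Am Pi0 X i - iter Am Pi0 X (d + 1) i := by
        rw [← conjSum_sub, conjSum_smul]; rfl
      rw [h2, smul_sub, smul_smul, ← pow_succ]
      abel
    rw [key]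
    exact (psd_smul' (pow_nonneg hlam d) (h1 i)).add
      (conjSum_psd Am Pi0 hPnn (fun j => ih j) i)

end Aux

/-- (Remark 3, time-homogeneous stability criterion.) For a single
stochastic matrix `Π` (constant switching sequence), the time-homogeneous Markov jump linear
system is exponentially mean square stable iff there exist symmetric positive definite
matrices `Z(1),…,Z(N)` with `A(i)ᵀ (Σ_j π_{ij} Z(j)) A(i) − Z(i)` negative definite for
every `i ∈ 𝒩`. -/
theorem statement17 (n N : ℕ) (Am : Fin N → Matrix (Fin n) (Fin n) ℝ)
    (Pi0 : Matrix (Fin N) (Fin N) ℝ)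
    (hPnn : ∀ i j : Fin N, 0 ≤ Pi0 i j)
    (hProw : ∀ i : Fin N, ∑ j, Pi0 i j = 1) :
    (∃ c lam : ℝ, 1 ≤ c ∧ 0 ≤ lam ∧ lam < 1 ∧
        EMSSWith Am (fun _ : Fin 1 => Pi0) c lam (fun _ => 0)) ↔
      ∃ Z : Fin N → Matrix (Fin n) (Fin n) ℝ,
        (∀ i, (Z i).PosDef) ∧
        ∀ i, (Z i - (Am i)ᵀ * (∑ j, Pi0 i j • Z j) * Am i).PosDef := by
  constructor
  · rintro ⟨c, lam, hc, hlam0, hlam1, hE⟩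
    have hc0 : (0:ℝ) < c := lt_of_lt_of_le one_pos hc
    obtain ⟨D, hD⟩ := exists_pow_lt_of_lt_one (show (0:ℝ) < 1 / c by positivity) hlam1
    have hpow : (0:ℝ) ≤ lam ^ D := pow_nonneg hlam0 D
    have hD1 : c * lam ^ (D + 1) < 1 := by
      have h1 : lam ^ (D + 1) ≤ lam ^ D := by
        rw [pow_succ]
        nlinarith
      have h2 : c * lam ^ D < 1 := by
        have := (mul_lt_mul_iff_right₀ hc0).mpr hD
        rwa [mul_one_div, div_self (ne_of_gt hc0)] at this
      nlinarith
    have hGdpsd : ∀ d i, (iter Am Pi0 (fun _ => 1) d i).PosSemidef :=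
      iter_psd Am Pi0 hPnn fun _ => Matrix.PosSemidef.one
    refine ⟨fun i => ∑ d ∈ Finset.range (D + 1), iter Am Pi0 (fun _ => 1) d i,
      fun i => ?_, fun i => ?_⟩
    · beta_reduce
      rw [Finset.sum_range_succ']
      exact Matrix.PosDef.posSemidef_add
        (psd_sum' _ _ fun d _ => hGdpsd _ i) (show ((1:Matrix (Fin n) (Fin n) ℝ)).PosDef by
          simpa using pd_smul_one (n := n) one_pos)
    · beta_reduce
      have hconj : (Am i)ᵀ *
          (∑ j, Pi0 i j • ∑ d ∈ Finset.range (D + 1), iter Am Pi0 (fun _ => 1) d j) * Am i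
          = ∑ d ∈ Finset.range (D + 1), iter Am Pi0 (fun _ => 1) (d + 1) i := by
        show conjSum Am Pi0 (fun j => ∑ d ∈ Finset.range (D + 1), iter Am Pi0 (fun _ => 1) d j) i
          = _
        rw [conjSum_sum]
        rfl
      rw [hconj]
      have htel : (∑ d ∈ Finset.range (D + 1), iter Am Pi0 (fun _ => 1) d i)
          - (∑ d ∈ Finset.range (D + 1), iter Am Pi0 (fun _ => 1) (d + 1) i)
          = 1 - iter Am Pi0 (fun _ => 1) (D + 1) i := by
        rw [Finset.sum_range_succ' (fun d => iter Am Pi0 (fun _ => 1) d i) D,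
          Finset.sum_range_succ (fun d => iter Am Pi0 (fun _ => 1) (d + 1) i) D]
        have h0 : iter Am Pi0 (fun _ => (1:Matrix (Fin n) (Fin n) ℝ)) 0 i = 1 := rfl
        rw [h0]
        abel
      rw [htel]
      have hG : ((c * lam ^ (D + 1)) • (1 : Matrix (Fin n) (Fin n) ℝ)
          - iter Am Pi0 (fun _ => 1) (D + 1) i).PosSemidef := by
        have h := hE i 0 (D + 1) (Nat.zero_le _)
        rwa [Gmat_eq Am Pi0 hProw, Nat.sub_zero] at h
      have hsplit : (1 : Matrix (Fin n) (Fin n) ℝ) - iter Am Pi0 (fun _ => 1) (D + 1) i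
          = (1 - c * lam ^ (D + 1)) • (1 : Matrix (Fin n) (Fin n) ℝ)
            + ((c * lam ^ (D + 1)) • (1 : Matrix (Fin n) (Fin n) ℝ)
              - iter Am Pi0 (fun _ => 1) (D + 1) i) := by
        rw [sub_smul, one_smul]
        abel
      rw [hsplit]
      exact (pd_smul_one (by linarith)).add_posSemidef hG
  · rintro ⟨Z, hZpd, hZdec⟩
    rcases Nat.eq_zero_or_pos N with hN | hN
    · subst hN
      exact ⟨1, 0, le_refl 1, le_refl 0, zero_lt_one, fun i => i.elim0⟩
    haveI hne : Nonempty (Fin N) := Fin.pos_iff_nonempty.mp hN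
    -- per-mode constants
    choose b hb1 hbpsd using fun i => exists_upper (hZpd i).1
    choose δZ hδZ0 hδZ1 hδZpsd using fun i => exists_lower (hZpd i)
    choose δ hδ0 hδ1 hδpsd using fun i => exists_lower (hZdec i)
    have hb0 : ∀ i, (0:ℝ) < b i := fun i => lt_of_lt_of_le one_pos (hb1 i)
    -- uniform constants
    set a : ℝ := Finset.univ.sup' Finset.univ_nonempty (fun i => 1 / δZ i) with ha_def
    set bB : ℝ := Finset.univ.sup' Finset.univ_nonempty b with hbB_def
    set lam : ℝ := Finset.univ.sup' Finset.univ_nonempty (fun i => 1 - δ i / b i) with hlam_def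
    have ha_ge : ∀ i, 1 / δZ i ≤ a := by
      intro i; rw [ha_def]; exact Finset.le_sup' (fun i => 1 / δZ i) (Finset.mem_univ i)
    have hbB_ge : ∀ i, b i ≤ bB := by
      intro i; rw [hbB_def]; exact Finset.le_sup' b (Finset.mem_univ i)
    have hlam_ge : ∀ i, 1 - δ i / b i ≤ lam := by
      intro i; rw [hlam_def]; exact Finset.le_sup' (fun i => 1 - δ i / b i) (Finset.mem_univ i)
    have ha0 : (0:ℝ) ≤ a := by
      obtain ⟨i⟩ := hne
      have h1 : (0:ℝ) < 1 / δZ i := one_div_pos.mpr (hδZ0 i)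
      linarith [ha_ge i]
    have hbB0 : (0:ℝ) ≤ bB := by
      obtain ⟨i⟩ := hne
      linarith [hbB_ge i, hb0 i]
    have hlam0 : (0:ℝ) ≤ lam := by
      obtain ⟨i⟩ := hne
      have h1 : δ i / b i ≤ 1 := (div_le_one (hb0 i)).mpr (le_trans (hδ1 i) (hb1 i))
      linarith [hlam_ge i]
    have hlam1 : lam < 1 := by
      rw [hlam_def, Finset.sup'_lt_iff]
      intro i _
      have h1 : 0 < δ i / b i := div_pos (hδ0 i) (hb0 i)
      linarith
    -- uniform matrix inequalities
    have haZ : ∀ i, (a • Z i - 1).PosSemidef := by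
      intro i
      have h1 : ((1 / δZ i) • Z i - 1).PosSemidef := by
        have h := psd_smul' (le_of_lt (one_div_pos.mpr (hδZ0 i))) (hδZpsd i)
        have heq : (1 / δZ i) • (Z i - δZ i • 1)
            = (1 / δZ i) • Z i - (1 : Matrix (Fin n) (Fin n) ℝ) := by
          rw [smul_sub, smul_smul, one_div, inv_mul_cancel₀ (ne_of_gt (hδZ0 i)), one_smul]
        rwa [heq] at h
      have heq2 : a • Z i - 1 = ((1 / δZ i) • Z i - 1) + (a - 1 / δZ i) • Z i := by
        rw [sub_smul]
        abel
      rw [heq2]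
      exact h1.add (psd_smul' (sub_nonneg.mpr (ha_ge i)) (hZpd i).posSemidef)
    have hbBZ : ∀ i, (bB • (1 : Matrix (Fin n) (Fin n) ℝ) - Z i).PosSemidef := by
      intro i
      have heq2 : bB • (1 : Matrix (Fin n) (Fin n) ℝ) - Z i
          = (b i • 1 - Z i) + (bB - b i) • (1 : Matrix (Fin n) (Fin n) ℝ) := by
        rw [sub_smul]
        abel
      rw [heq2]
      exact (hbpsd i).add (psd_smul' (sub_nonneg.mpr (hbB_ge i)) Matrix.PosSemidef.one)
    have h1 : ∀ i, (lam • Z i - conjSum Am Pi0 Z i).PosSemidef := by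
      intro i
      have key : (1 - δ i / b i) • Z i - conjSum Am Pi0 Z i
          = ((Z i - conjSum Am Pi0 Z i) - δ i • 1)
            + (δ i / b i) • (b i • (1 : Matrix (Fin n) (Fin n) ℝ) - Z i) := by
        rw [smul_sub, smul_smul, div_mul_cancel₀ _ (ne_of_gt (hb0 i)), sub_smul, one_smul]
        abel
      have hpart : ((1 - δ i / b i) • Z i - conjSum Am Pi0 Z i).PosSemidef := by
        rw [key]
        exact (hδpsd i).add
          (psd_smul' (le_of_lt (div_pos (hδ0 i) (hb0 i))) (hbpsd i))
      have heq2 : lam • Z i - conjSum Am Pi0 Z i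
          = ((1 - δ i / b i) • Z i - conjSum Am Pi0 Z i)
            + (lam - (1 - δ i / b i)) • Z i := by
        module
      rw [heq2]
      exact hpart.add (psd_smul' (sub_nonneg.mpr (hlam_ge i)) (hZpd i).posSemidef)
    -- main decay estimate
    have main : ∀ d i, ((max 1 (a * bB) * lam ^ d) • (1 : Matrix (Fin n) (Fin n) ℝ)
        - iter Am Pi0 (fun _ => 1) d i).PosSemidef := by
      intro d i
      have T1 : (a • iter Am Pi0 Z d i - iter Am Pi0 (fun _ => 1) d i).PosSemidef := by
        have h := iter_mono Am Pi0 hPnn (X := fun _ => 1) (Y := fun j => a • Z j)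
          (fun j => haZ j) d i
        rwa [iter_smul] at h
      have T2 : (a • (lam ^ d • Z i) - a • iter Am Pi0 Z d i).PosSemidef := by
        have h := psd_smul' ha0
          (iter_contract Am Pi0 hPnn hlam0 (fun j => (hZpd j).posSemidef) h1 d i)
        rwa [smul_sub] at h
      have T3 : (a • (lam ^ d • (bB • (1 : Matrix (Fin n) (Fin n) ℝ) - Z i))).PosSemidef :=
        psd_smul' ha0 (psd_smul' (pow_nonneg hlam0 d) (hbBZ i))
      have T4 : (((max 1 (a * bB) - a * bB) * lam ^ d) •
          (1 : Matrix (Fin n) (Fin n) ℝ)).PosSemidef :=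
        psd_smul' (mul_nonneg (sub_nonneg.mpr (le_max_right _ _)) (pow_nonneg hlam0 d))
          Matrix.PosSemidef.one
      have key : (max 1 (a * bB) * lam ^ d) • (1 : Matrix (Fin n) (Fin n) ℝ)
          - iter Am Pi0 (fun _ => 1) d i
          = ((max 1 (a * bB) - a * bB) * lam ^ d) • (1 : Matrix (Fin n) (Fin n) ℝ)
            + a • (lam ^ d • (bB • (1 : Matrix (Fin n) (Fin n) ℝ) - Z i))
            + (a • (lam ^ d • Z i) - a • iter Am Pi0 Z d i)
            + (a • iter Am Pi0 Z d i - iter Am Pi0 (fun _ => 1) d i) := by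
        simp only [smul_sub, smul_smul, sub_smul]
        module
      rw [key]
      exact ((T4.add T3).add T2).add T1
    refine ⟨max 1 (a * bB), lam, le_max_left _ _, hlam0, hlam1, ?_⟩
    intro i j k _
    have h := main (k - j) i
    rwa [← Gmat_eq Am Pi0 hProw] at h

end SMJLS
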